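/- Lemma on counting coprime residues in an arithmetic progression: Let d, r, s be positive integers with d∣r and s∣r, and let x be an integer. Then the number of a with 1 ≤ a ≤ r, gcd(a,s)=1, and a ≡ x (mod d) equals (r/d)·∏_{p∣s, p∤d}(1 - 1/p) if gcd(d,s,x)=1, and equals 0 otherwise. -/

import Mathlib

open Finset

private lemma count_ap (d r : ℕ) (x : ℤ) (hd : 0 < d) (hdr : d ∣ r) :
    ((Finset.Icc 1 r).filter (fun a : ℕ => (a : ℤ) % d = x % d)).card = r / d := by
  obtain ⟨k, rfl⟩ := hdr
  have hcast : ((Finset.Icc 1 (d * k)).filter (fun a : ℕ => (a : ℤ) % d = x % d)).card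
      = ((Finset.Ioc (0 : ℤ) (d * k : ℕ)).filter (fun y => y ≡ x [ZMOD (d : ℤ)])).card := by
    refine Finset.card_nbij (fun a => (a : ℤ)) ?_ ?_ ?_
    · intro a ha
      simp only [mem_filter, mem_Icc, mem_Ioc, Finset.mem_coe] at ha ⊢
      exact ⟨⟨by exact_mod_cast ha.1.1, by exact_mod_cast ha.1.2⟩, ha.2⟩
    · intro a _ b _ hab
      exact Nat.cast_inj.mp hab
    · intro y hy
      simp only [Finset.coe_filter, Set.mem_setOf_eq, mem_Ioc] at hy
      lift y to ℕ using le_of_lt hy.1.1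
      refine ⟨y, ?_, rfl⟩
      simp only [Finset.coe_filter, Set.mem_setOf_eq, mem_Icc]
      exact ⟨⟨by exact_mod_cast hy.1.1, by exact_mod_cast hy.1.2⟩, hy.2⟩
  rw [hcast]
  have hd' : (0 : ℤ) < (d : ℤ) := by exact_mod_cast hd
  have h2 := Int.Ioc_filter_modEq_card (0 : ℤ) ((d * k : ℕ) : ℤ) hd' x
  have hdq : ((d : ℚ)) ≠ 0 := by positivity
  have heq : ((((d * k : ℕ) : ℤ) : ℚ) - ((x : ℤ) : ℚ)) / (((d : ℤ) : ℚ))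
      = ((k : ℤ) : ℚ) + ((-x : ℚ) / (d : ℚ)) := by
    push_cast
    field_simp
    ring
  rw [heq, Int.floor_intCast_add] at h2
  have heq2 : ((((0 : ℤ)) : ℚ) - ((x : ℤ) : ℚ)) / (((d : ℤ) : ℚ)) = (-x : ℚ) / (d : ℚ) := by
    push_cast; ring
  rw [heq2] at h2
  have : (((Finset.Ioc (0 : ℤ) (d * k : ℕ)).filter (fun y => y ≡ x [ZMOD (d : ℤ)])).card : ℤ) = k := by
    rw [h2]; omega
  have hk : d * k / d = k := Nat.mul_div_cancel_left k hd
  omega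

private lemma squarefree_prod_primes {t : Finset ℕ} (h : ∀ p ∈ t, p.Prime) :
    Squarefree (∏ p ∈ t, p) := by
  classical
  induction t using Finset.induction_on with
  | empty => simp [squarefree_one]
  | @insert a t' hnotmem ih =>
    rw [Finset.prod_insert hnotmem]
    have ha : a.Prime := h a (Finset.mem_insert_self a t')
    have ht' : ∀ p ∈ t', p.Prime := fun p hp => h p (Finset.mem_insert_of_mem hp)
    refine (Nat.squarefree_mul ?_).mpr ⟨ha.squarefree, ih ht'⟩
    exact Nat.Coprime.prod_right fun p hp =>
      (Nat.coprime_primes ha (ht' p hp)).mpr (fun he => hnotmem (he ▸ hp))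

private lemma lemA : ∀ (s₁ : ℕ), Squarefree s₁ → ∀ (d r : ℕ) (x : ℤ), 0 < d → Nat.Coprime s₁ d →
    d ∣ r → s₁ ∣ r →
    ((((Finset.Icc 1 r).filter (fun a : ℕ => Nat.Coprime a s₁ ∧ (a : ℤ) % d = x % d)).card : ℚ)
      = (r : ℚ) / d * ∏ q ∈ s₁.primeFactors, (1 - 1 / (q : ℚ))) := by
  intro s₁
  induction s₁ using Nat.strong_induction_on with
  | _ s₁ ih =>
  intro hsf d r x hd hcop hdr hs₁r
  rcases eq_or_ne s₁ 1 with rfl | hne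
  · simp only [Nat.coprime_one_right_iff, true_and]
    rw [count_ap d r x hd hdr, Nat.primeFactors_one]
    simp [Nat.cast_div hdr (show (d : ℚ) ≠ 0 by positivity)]
  · have hs₁0 : s₁ ≠ 0 := hsf.ne_zero
    set p := s₁.minFac with hp_def
    have hp : p.Prime := Nat.minFac_prime hne
    have hpdvd : p ∣ s₁ := Nat.minFac_dvd s₁
    obtain ⟨s₂, hs₁eq⟩ := hpdvd
    have hpdvd : p ∣ s₁ := ⟨s₂, hs₁eq⟩
    have hs₂dvd : s₂ ∣ s₁ := ⟨p, by rw [hs₁eq]; ring⟩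
    have hs₂sf : Squarefree s₂ := hsf.squarefree_of_dvd hs₂dvd
    have hs₂0 : s₂ ≠ 0 := hs₂sf.ne_zero
    have hpns₂ : ¬ p ∣ s₂ := by
      rintro ⟨c, hc⟩
      exact hp.not_isUnit (hsf p ⟨c, by rw [hs₁eq, hc]; ring⟩)
    have hs₂lt : s₂ < s₁ := by
      have h2 : 2 ≤ p := hp.two_le
      have hb : 0 < s₂ := Nat.pos_of_ne_zero hs₂0
      calc s₂ < 2 * s₂ := by omega
        _ ≤ p * s₂ := Nat.mul_le_mul_right s₂ h2
        _ = s₁ := hs₁eq.symm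
    have hcop₂ : Nat.Coprime s₂ d := Nat.Coprime.coprime_dvd_left hs₂dvd hcop
    have hcopp : Nat.Coprime p d := Nat.Coprime.coprime_dvd_left hpdvd hcop
    have hcps₂ : Nat.Coprime p s₂ := (Nat.Prime.coprime_iff_not_dvd hp).mpr hpns₂
    have hpr : p ∣ r := hpdvd.trans hs₁r
    have hpd_r : p * d ∣ r := Nat.Coprime.mul_dvd_of_dvd_of_dvd hcopp hpr hdr
    have hd_rp : d ∣ r / p := (Nat.dvd_div_iff_mul_dvd hpr).mpr hpd_r
    have hs₂_rp : s₂ ∣ r / p := (Nat.dvd_div_iff_mul_dvd hpr).mpr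
      (by rw [← hs₁eq]; exact hs₁r)
    obtain ⟨u, v, huv⟩ := Nat.isCoprime_iff_coprime.mpr hcopp
    have hcong : ∀ b : ℕ, ((b : ℤ) % d = (u * x) % d) ↔ (((p * b : ℕ) : ℤ) % d = x % d) := by
      intro b
      constructor
      · intro hb
        have h1 : ((p : ℤ) * b) ≡ (p : ℤ) * (u * x) [ZMOD (d : ℤ)] := Int.ModEq.mul_left _ hb
        have h2 : ((p : ℤ) * (u * x)) ≡ x [ZMOD (d : ℤ)] :=
          Int.modEq_iff_dvd.mpr ⟨v * x, by linear_combination (-x) * huv⟩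
        show (((p * b : ℕ) : ℤ)) % d = x % d
        push_cast
        exact h1.trans h2
      · intro hb
        have hb' : ((p : ℤ) * b) ≡ x [ZMOD (d : ℤ)] := by push_cast at hb; exact hb
        have h1 : (u * ((p : ℤ) * b)) ≡ u * x [ZMOD (d : ℤ)] := hb'.mul_left u
        have h2 : (b : ℤ) ≡ u * ((p : ℤ) * b) [ZMOD (d : ℤ)] :=
          Int.modEq_iff_dvd.mpr ⟨-(v * b), by linear_combination (b : ℤ) * huv⟩
        exact h2.trans h1
    -- set splitting
    have hsplit := Finset.card_filter_add_card_filter_not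
      (s := (Finset.Icc 1 r).filter (fun a : ℕ => Nat.Coprime a s₂ ∧ (a : ℤ) % d = x % d))
      (p := fun a => p ∣ a)
    have hT : (Finset.Icc 1 r).filter (fun a : ℕ => Nat.Coprime a s₁ ∧ (a : ℤ) % d = x % d)
        = ((Finset.Icc 1 r).filter (fun a : ℕ => Nat.Coprime a s₂ ∧ (a : ℤ) % d = x % d)).filter
            (fun a => ¬ p ∣ a) := by
      rw [Finset.filter_filter]
      apply Finset.filter_congr
      intro a _
      have h1 : Nat.Coprime a s₁ ↔ Nat.Coprime a p ∧ Nat.Coprime a s₂ := by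
        rw [hs₁eq, Nat.coprime_mul_iff_right]
      have h2 : Nat.Coprime a p ↔ ¬ p ∣ a := by
        rw [Nat.coprime_comm]; exact hp.coprime_iff_not_dvd
      rw [h1, h2]
      tauto
    have hBC : ((Finset.Icc 1 (r / p)).filter
          (fun b : ℕ => Nat.Coprime b s₂ ∧ (b : ℤ) % d = (u * x) % d)).card
        = (((Finset.Icc 1 r).filter (fun a : ℕ => Nat.Coprime a s₂ ∧ (a : ℤ) % d = x % d)).filter
            (fun a => p ∣ a)).card := by
      refine Finset.card_nbij (fun b => p * b) ?_ ?_ ?_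
      · intro b hb
        simp only [Finset.mem_filter, Finset.mem_Icc, Finset.mem_coe] at hb ⊢
        obtain ⟨⟨hb1, hb2⟩, hbc, hbm⟩ := hb
        refine ⟨⟨⟨?_, ?_⟩, ?_, ?_⟩, Dvd.intro b rfl⟩
        · have := hp.pos; exact Nat.one_le_iff_ne_zero.mpr (by positivity)
        · calc p * b ≤ p * (r / p) := Nat.mul_le_mul_left p hb2
            _ = r := Nat.mul_div_cancel' hpr
        · exact Nat.Coprime.mul hcps₂ hbc
        · exact (hcong b).mp hbm
      · intro a _ b _ hab
        exact Nat.eq_of_mul_eq_mul_left hp.pos hab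
      · intro a ha
        simp only [Finset.coe_filter, Set.mem_setOf_eq, Finset.mem_filter, Finset.mem_Icc] at ha
        obtain ⟨⟨⟨ha1, ha2⟩, hac, ham⟩, hpa⟩ := ha
        obtain ⟨b, rfl⟩ := hpa
        refine ⟨b, ?_, rfl⟩
        simp only [Finset.coe_filter, Set.mem_setOf_eq, Finset.mem_Icc]
        have hb0 : b ≠ 0 := by rintro rfl; simp at ha1
        refine ⟨⟨Nat.one_le_iff_ne_zero.mpr hb0, ?_⟩, ?_, ?_⟩
        · exact (Nat.le_div_iff_mul_le hp.pos).mpr (by rwa [mul_comm b p])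
        · exact (Nat.coprime_mul_iff_left.mp hac).2
        · exact (hcong b).mpr ham
    have hAcard := ih s₂ hs₂lt hs₂sf d r x hd hcop₂ hdr (hs₂dvd.trans hs₁r)
    have hCcard := ih s₂ hs₂lt hs₂sf d (r / p) (u * x) hd hcop₂ hd_rp hs₂_rp
    have hpnotmem : p ∉ s₂.primeFactors := fun hmem => hpns₂ (Nat.dvd_of_mem_primeFactors hmem)
    have hpf : s₁.primeFactors = insert p s₂.primeFactors := by
      rw [hs₁eq, Nat.primeFactors_mul hp.ne_zero hs₂0, Nat.Prime.primeFactors hp,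
        ← Finset.insert_eq]
    have hprod : ∏ q ∈ s₁.primeFactors, (1 - 1 / (q : ℚ))
        = (1 - 1 / (p : ℚ)) * ∏ q ∈ s₂.primeFactors, (1 - 1 / (q : ℚ)) := by
      rw [hpf, Finset.prod_insert hpnotmem]
    rw [hT, hprod]
    have hrp : ((r / p : ℕ) : ℚ) = (r : ℚ) / p := by
      rw [Nat.cast_div hpr (by exact_mod_cast hp.ne_zero)]
    rw [hrp] at hCcard
    have hp0 : (p : ℚ) ≠ 0 := by exact_mod_cast hp.ne_zero
    have hd0 : (d : ℚ) ≠ 0 := by positivity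
    have hkey : (r : ℚ) / d * ((1 - 1 / (p : ℚ)) * ∏ q ∈ s₂.primeFactors, (1 - 1 / (q : ℚ)))
        = (r : ℚ) / d * ∏ q ∈ s₂.primeFactors, (1 - 1 / (q : ℚ))
          - ((r : ℚ) / p) / d * ∏ q ∈ s₂.primeFactors, (1 - 1 / (q : ℚ)) := by
      field_simp
    have hcast : (((((Finset.Icc 1 r).filter
          (fun a : ℕ => Nat.Coprime a s₂ ∧ (a : ℤ) % d = x % d)).filter (fun a => p ∣ a)).card : ℚ)
        + ((((Finset.Icc 1 r).filter
          (fun a : ℕ => Nat.Coprime a s₂ ∧ (a : ℤ) % d = x % d)).filter (fun a => ¬ p ∣ a)).card : ℚ))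
        = (((Finset.Icc 1 r).filter (fun a : ℕ => Nat.Coprime a s₂ ∧ (a : ℤ) % d = x % d)).card : ℚ) := by
      exact_mod_cast congrArg (fun n : ℕ => (n : ℚ)) hsplit
    rw [← hBC] at hcast
    linarith [hcast, hAcard, hCcard, hkey]

theorem count_coprime_in_ap (d r s : ℕ) (x : ℤ) (hd : 0 < d) (hs : 0 < s)
    (hdr : d ∣ r) (hsr : s ∣ r) :
    (((Finset.Icc 1 r).filter
        (fun a => Nat.gcd a s = 1 ∧ (a : ℤ) % (d : ℤ) = x % (d : ℤ))).card : ℚ)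
      = if Int.gcd (Nat.gcd d s : ℤ) x = 1 then
          (r : ℚ) / d * ∏ p ∈ s.primeFactors.filter (fun p => ¬ p ∣ d), (1 - 1 / (p : ℚ))
        else 0 := by
  by_cases hgcd : Int.gcd (Nat.gcd d s : ℤ) x = 1
  · rw [if_pos hgcd]
    set Q := s.primeFactors.filter (fun p => ¬ p ∣ d) with hQ
    have hQprime : ∀ p ∈ Q, p.Prime := fun p hp =>
      Nat.prime_of_mem_primeFactors (Finset.mem_filter.mp hp).1
    set s₁ := ∏ p ∈ Q, p with hs₁
    have hs₁sf : Squarefree s₁ := squarefree_prod_primes hQprime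
    have hfacs : s₁.primeFactors = Q := Nat.primeFactors_prod hQprime
    have hs₁s : s₁ ∣ s := by
      calc s₁ ∣ ∏ p ∈ s.primeFactors, p :=
            Finset.prod_dvd_prod_of_subset _ _ _ (Finset.filter_subset _ _)
        _ ∣ s := Nat.prod_primeFactors_dvd s
    have hs₁d : Nat.Coprime s₁ d := Nat.Coprime.prod_left fun p hp =>
      ((hQprime p hp).coprime_iff_not_dvd).mpr (Finset.mem_filter.mp hp).2
    have hfilter : (Finset.Icc 1 r).filter
          (fun a => Nat.gcd a s = 1 ∧ (a : ℤ) % (d : ℤ) = x % (d : ℤ))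
        = (Finset.Icc 1 r).filter
          (fun a : ℕ => Nat.Coprime a s₁ ∧ (a : ℤ) % d = x % d) := by
      apply Finset.filter_congr
      intro a ha
      have ha1 : 1 ≤ a := (Finset.mem_Icc.mp ha).1
      constructor
      · rintro ⟨h1, h2⟩
        exact ⟨Nat.Coprime.coprime_dvd_right hs₁s h1, h2⟩
      · rintro ⟨h1, h2⟩
        refine ⟨?_, h2⟩
        by_contra hnc
        obtain ⟨q, hq, hqa, hqs⟩ := Nat.Prime.not_coprime_iff_dvd.mp hnc
        by_cases hqd : q ∣ d
        · -- q divides d, s, and x, contradicting hgcd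
          have hdvd : (d : ℤ) ∣ (x : ℤ) - (a : ℤ) := Int.ModEq.dvd h2
          have hqx : (q : ℤ) ∣ x := by
            have h1' : (q : ℤ) ∣ (x : ℤ) - (a : ℤ) :=
              dvd_trans (Int.natCast_dvd_natCast.mpr hqd) hdvd
            have h2' : (q : ℤ) ∣ (a : ℤ) := Int.natCast_dvd_natCast.mpr hqa
            have := dvd_add h1' h2'
            simpa using this
          have hqg : (q : ℤ) ∣ (Nat.gcd d s : ℤ) :=
            Int.natCast_dvd_natCast.mpr (Nat.dvd_gcd hqd hqs)
          have : (q : ℤ) ∣ (Int.gcd (Nat.gcd d s : ℤ) x : ℤ) := Int.dvd_coe_gcd hqg hqx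
          rw [hgcd] at this
          have : q ∣ 1 := by exact_mod_cast this
          exact hq.ne_one (Nat.dvd_one.mp this)
        · have hqQ : q ∈ Q := Finset.mem_filter.mpr
            ⟨Nat.mem_primeFactors.mpr ⟨hq, hqs, hs.ne'⟩, hqd⟩
          have hqs₁ : q ∣ s₁ := Finset.dvd_prod_of_mem _ hqQ
          have : q ∣ 1 := h1 ▸ Nat.dvd_gcd hqa hqs₁
          exact hq.ne_one (Nat.dvd_one.mp this)
    rw [hfilter, lemA s₁ hs₁sf d r x hd hs₁d hdr (hs₁s.trans hsr), hfacs]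
  · rw [if_neg hgcd]
    have hgpos : 0 < Nat.gcd d s := Nat.gcd_pos_of_pos_left s hd
    obtain ⟨q, hq, hqg⟩ := Nat.exists_prime_and_dvd
      (show Int.gcd (Nat.gcd d s : ℤ) x ≠ 1 from hgcd)
    have hqds : q ∣ Nat.gcd d s := by
      have h1 : ((Int.gcd (Nat.gcd d s : ℤ) x : ℕ) : ℤ) ∣ (Nat.gcd d s : ℤ) := Int.gcd_dvd_left _ _
      have h2 : (q : ℤ) ∣ (Nat.gcd d s : ℤ) :=
        dvd_trans (Int.natCast_dvd_natCast.mpr hqg) h1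
      exact_mod_cast h2
    have hqx : (q : ℤ) ∣ x :=
      dvd_trans (Int.natCast_dvd_natCast.mpr hqg) (Int.gcd_dvd_right _ _)
    have hqd : q ∣ d := hqds.trans (Nat.gcd_dvd_left d s)
    have hqs : q ∣ s := hqds.trans (Nat.gcd_dvd_right d s)
    have hempty : (Finset.Icc 1 r).filter
        (fun a => Nat.gcd a s = 1 ∧ (a : ℤ) % (d : ℤ) = x % (d : ℤ)) = ∅ := by
      apply Finset.filter_false_of_mem
      rintro a _ ⟨h1, h2⟩
      have hdvd : (d : ℤ) ∣ (x : ℤ) - (a : ℤ) := Int.ModEq.dvd h2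
      have hqa : (q : ℤ) ∣ (a : ℤ) := by
        have h3 : (q : ℤ) ∣ (x : ℤ) - (a : ℤ) :=
          dvd_trans (Int.natCast_dvd_natCast.mpr hqd) hdvd
        have := dvd_sub hqx h3
        simpa using this
      have hqa' : q ∣ a := Int.natCast_dvd_natCast.mp hqa
      have : q ∣ 1 := h1 ▸ Nat.dvd_gcd hqa' hqs
      exact hq.ne_one (Nat.dvd_one.mp this)
    rw [hempty]
    simp
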